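/- The polygon group G_{p,q} = ⟨a_0,…,a_{p-1} | a_i^q = 1, a_i a_{i+1} = a_{i+1} a_i (indices mod p)⟩ is a subgroup of index p in the group H_{p,q} = ⟨a, r | a^q = r^p = 1, [a, r a r^{-1}] = 1⟩, under the embedding sending a_i to r^i a r^{-i}. -/

import Mathlib

open FreeGroup

/-- Relations of the polygon group `G_{p,q}` on generators indexed by `ZMod p`. -/
def polygonRels (p q : ℕ) : Set (FreeGroup (ZMod p)) :=
  (Set.range fun i : ZMod p => (of i) ^ q) ∪
    (Set.range fun i : ZMod p => of i * of (i + 1) * (of i)⁻¹ * (of (i + 1))⁻¹)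

/-- The polygon group `G_{p,q}`. -/
def PolygonGroup (p q : ℕ) := PresentedGroup (polygonRels p q)

/-- Generators of `H_{p,q}`: `true ↦ a`, `false ↦ r`. -/
def HRels (p q : ℕ) : Set (FreeGroup Bool) :=
  { (of true) ^ q, (of false) ^ p,
    of true * (of false * of true * (of false)⁻¹) * (of true)⁻¹ *
      (of false * of true * (of false)⁻¹)⁻¹ }

/-- The group `H_{p,q}`. -/
def HGroup (p q : ℕ) := PresentedGroup (HRels p q)

instance (p q : ℕ) : Group (PolygonGroup p q) := by unfold PolygonGroup; infer_instance
instance (p q : ℕ) : Group (HGroup p q) := by unfold HGroup; infer_instance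

namespace Stmt1Aux

set_option linter.unusedSectionVars false

lemma mk_rel_one {α : Type*} {rels : Set (FreeGroup α)} {r : FreeGroup α} (h : r ∈ rels) :
    PresentedGroup.mk rels r = 1 :=
  (QuotientGroup.eq_one_iff r).2 (Subgroup.subset_normalClosure h)

/-- The polygon group, with its `PresentedGroup` type. -/
abbrev Gp (p q : ℕ) := PresentedGroup (polygonRels p q)
/-- The group `H`, with its `PresentedGroup` type. -/
abbrev Hp (p q : ℕ) := PresentedGroup (HRels p q)

variable (p q : ℕ)

/-- `a` in `H`. -/
def aa : Hp p q := PresentedGroup.of true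
/-- `r` in `H`. -/
def rr : Hp p q := PresentedGroup.of false

lemma aa_pow : (aa p q) ^ q = 1 := by
  have := mk_rel_one (rels := HRels p q) (r := (of true) ^ q) (by simp [HRels])
  simpa [aa, PresentedGroup.of] using this

lemma rr_pow : (rr p q) ^ p = 1 := by
  have := mk_rel_one (rels := HRels p q) (r := (of false) ^ p) (by simp [HRels])
  simpa [rr, PresentedGroup.of] using this

lemma aa_comm : Commute (aa p q) (rr p q * aa p q * (rr p q)⁻¹) := by
  have := mk_rel_one (rels := HRels p q)
    (r := of true * (of false * of true * (of false)⁻¹) * (of true)⁻¹ *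
      (of false * of true * (of false)⁻¹)⁻¹) (by simp [HRels])
  have h : aa p q * (rr p q * aa p q * (rr p q)⁻¹) * (aa p q)⁻¹ *
      (rr p q * aa p q * (rr p q)⁻¹)⁻¹ = 1 := this
  unfold Commute SemiconjBy
  have h2 : aa p q * (rr p q * aa p q * (rr p q)⁻¹) * (aa p q)⁻¹ =
      rr p q * aa p q * (rr p q)⁻¹ := by
    have := mul_eq_one_iff_eq_inv.mp h
    rw [this, inv_inv]
  calc aa p q * (rr p q * aa p q * (rr p q)⁻¹)
      = (aa p q * (rr p q * aa p q * (rr p q)⁻¹) * (aa p q)⁻¹) * aa p q := by group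
    _ = (rr p q * aa p q * (rr p q)⁻¹) * aa p q := by rw [h2]

/-- conjugates of `a` by powers of `r`. -/
def c (k : ℤ) : Hp p q := (rr p q) ^ k * aa p q * ((rr p q) ^ k)⁻¹

lemma rr_zpow_eq {k l : ℤ} (h : (k : ZMod p) = (l : ZMod p)) :
    (rr p q) ^ k = (rr p q) ^ l := by
  have hd : (p : ℤ) ∣ k - l := by
    have := (ZMod.intCast_eq_intCast_iff' k l p).mp ?_
    · exact (ZMod.intCast_zmod_eq_zero_iff_dvd _ _).mp
        (by push_cast; rw [sub_eq_zero]; exact_mod_cast h)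
    · exact_mod_cast h
  obtain ⟨m, hm⟩ := hd
  have : (rr p q) ^ (k - l) = 1 := by
    rw [hm, zpow_mul]
    norm_cast
    rw [rr_pow, one_zpow]
  have h2 := mul_eq_one_iff_eq_inv.mp (by rw [zpow_sub] at this; exact this)
  rw [inv_inv] at h2
  exact h2

lemma c_congr {k l : ℤ} (h : (k : ZMod p) = (l : ZMod p)) : c p q k = c p q l := by
  unfold c; rw [rr_zpow_eq p q h]

lemma c_commute (k : ℤ) : Commute (c p q k) (c p q (k + 1)) := by
  have base := aa_comm p q
  have h1 : c p q (k + 1) = (rr p q) ^ k * (rr p q * aa p q * (rr p q)⁻¹) * ((rr p q) ^ k)⁻¹ := by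
    unfold c; rw [zpow_add_one]; group
  have := base.map (MulAut.conj ((rr p q) ^ k)).toMonoidHom
  simp only [MulAut.conj_apply, MulEquiv.coe_toMonoidHom] at this
  rw [h1]
  exact this

lemma c_pow_q (k : ℤ) : (c p q k) ^ q = 1 := by
  unfold c
  rw [conj_pow, aa_pow p q, mul_one, mul_inv_cancel]

lemma intCast_val [NeZero p] (i : ZMod p) : ((i.val : ℤ) : ZMod p) = i := by
  rw [Int.cast_natCast, ZMod.natCast_val, ZMod.cast_id]

lemma g_pow (j : ZMod p) : (PresentedGroup.of (rels := polygonRels p q) j) ^ q = 1 := by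
  have := mk_rel_one (rels := polygonRels p q) (r := (of j) ^ q) (Or.inl ⟨j, rfl⟩)
  rwa [MonoidHom.map_pow] at this

lemma g_comm (j : ZMod p) :
    (PresentedGroup.of (rels := polygonRels p q) j) * PresentedGroup.of (j + 1) *
      (PresentedGroup.of (rels := polygonRels p q) j)⁻¹ * (PresentedGroup.of (j + 1))⁻¹ = 1 := by
  have := mk_rel_one (rels := polygonRels p q)
    (r := of j * of (j + 1) * (of j)⁻¹ * (of (j + 1))⁻¹) (Or.inr ⟨j, rfl⟩)
  rwa [MonoidHom.map_mul, MonoidHom.map_mul, MonoidHom.map_mul, MonoidHom.map_inv,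
    MonoidHom.map_inv] at this

variable [NeZero p]

/-- the embedding. -/
def phi : Gp p q →* Hp p q :=
  PresentedGroup.toGroup (f := fun i : ZMod p => c p q i.val) (by
    rintro r (⟨i, rfl⟩ | ⟨i, rfl⟩)
    · simp only [MonoidHom.map_pow, FreeGroup.lift_apply_of]
      exact c_pow_q p q _
    · simp only [MonoidHom.map_mul, MonoidHom.map_inv, FreeGroup.lift_apply_of]
      have hcomm : Commute (c p q i.val) (c p q ((i + 1).val)) := by
        have h1 : c p q ((i + 1).val) = c p q (i.val + 1) := by
          apply c_congr
          rw [Int.cast_add, intCast_val, intCast_val, Int.cast_one]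
        rw [h1]
        exact c_commute p q _
      rw [hcomm.eq]
      group)

lemma phi_of (i : ZMod p) : phi p q (PresentedGroup.of i) = c p q i.val :=
  PresentedGroup.toGroup.of _

/-- shifting generators. -/
def sh (x : ZMod p) : Gp p q →* Gp p q :=
  PresentedGroup.toGroup (f := fun i : ZMod p => PresentedGroup.of (i + x)) (by
    rintro r (⟨i, rfl⟩ | ⟨i, rfl⟩)
    · simp only [MonoidHom.map_pow, FreeGroup.lift_apply_of]
      exact g_pow p q _
    · simp only [MonoidHom.map_mul, MonoidHom.map_inv, FreeGroup.lift_apply_of]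
      have := g_comm p q (i + x)
      rwa [show i + x + 1 = i + 1 + x by ring] at this)

lemma sh_of (x i : ZMod p) :
    sh p q x (PresentedGroup.of i) = PresentedGroup.of (i + x) :=
  PresentedGroup.toGroup.of _

lemma sh_comp (x y : ZMod p) : (sh p q x).comp (sh p q y) = sh p q (y + x) := by
  apply PresentedGroup.ext; intro i
  simp [MonoidHom.comp_apply, sh_of, add_assoc]

/-- shift as automorphism. -/
def shiftAut (x : ZMod p) : Gp p q ≃* Gp p q :=
  MonoidHom.toMulEquiv (sh p q x) (sh p q (-x))
    (by rw [sh_comp, add_neg_cancel]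
        apply PresentedGroup.ext; intro i; simp [sh_of])
    (by rw [sh_comp, neg_add_cancel]
        apply PresentedGroup.ext; intro i; simp [sh_of])

lemma shiftAut_apply (x : ZMod p) (g : Gp p q) :
    shiftAut p q x g = sh p q x g := rfl

/-- action of `ZMod p` on the polygon group. -/
def theta : Multiplicative (ZMod p) →* MulAut (Gp p q) where
  toFun x := shiftAut p q x.toAdd
  map_one' := by
    ext g
    show sh p q ((1 : Multiplicative (ZMod p)).toAdd) g = g
    rw [show (1 : Multiplicative (ZMod p)).toAdd = 0 from rfl]
    rw [show sh p q 0 = MonoidHom.id _ from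
      PresentedGroup.ext fun i => by simp [sh_of]]
    rfl
  map_mul' x y := by
    ext g
    show sh p q (x * y).toAdd g = sh p q x.toAdd (sh p q y.toAdd g)
    rw [← MonoidHom.comp_apply, sh_comp]
    congr 1
    rw [add_comm]
    rfl

/-- generator of the cyclic factor. -/
def tgen : Multiplicative (ZMod p) := Multiplicative.ofAdd 1

lemma tgen_pow : (tgen p) ^ p = 1 := by
  have : (tgen p) ^ p = Multiplicative.ofAdd (p • (1 : ZMod p)) := by
    rw [ofAdd_nsmul]; rfl
  rw [this, nsmul_eq_mul, mul_one, ZMod.natCast_self]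
  rfl

/-- the semidirect product. -/
abbrev K := SemidirectProduct (Gp p q) (Multiplicative (ZMod p)) (theta p q)

lemma theta_tgen_zpow_of0 (k : ℤ) :
    theta p q ((tgen p) ^ k) (PresentedGroup.of 0) = PresentedGroup.of ((k : ZMod p)) := by
  show sh p q (((tgen p) ^ k).toAdd) (PresentedGroup.of 0) = _
  rw [sh_of, zero_add]
  congr 1
  show (k • ((1 : ZMod p)) : ZMod p) = (k : ZMod p)
  rw [zsmul_eq_mul, mul_one]

/-- map `H → K`. -/
def psi : Hp p q →* K p q :=
  PresentedGroup.toGroup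
    (f := fun b : Bool => if b then SemidirectProduct.inl (PresentedGroup.of 0)
      else SemidirectProduct.inr (tgen p)) (by
    intro r hr
    simp only [HRels, Set.mem_insert_iff, Set.mem_singleton_iff] at hr
    rcases hr with rfl | rfl | rfl
    · simp only [MonoidHom.map_pow, FreeGroup.lift_apply_of, if_pos rfl, if_true]
      rw [← MonoidHom.map_pow, g_pow, MonoidHom.map_one]
    · simp only [MonoidHom.map_pow, FreeGroup.lift_apply_of, if_neg Bool.false_ne_true]
      rw [← MonoidHom.map_pow, tgen_pow, MonoidHom.map_one]
    · simp only [MonoidHom.map_mul, MonoidHom.map_inv, FreeGroup.lift_apply_of, if_pos rfl, if_true,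
        if_neg Bool.false_ne_true]
      have key : (SemidirectProduct.inr (tgen p) : K p q) *
          SemidirectProduct.inl (PresentedGroup.of 0) *
          (SemidirectProduct.inr (tgen p))⁻¹ =
          SemidirectProduct.inl (theta p q (tgen p) (PresentedGroup.of 0)) := by
        rw [← MonoidHom.map_inv]
        exact (SemidirectProduct.inl_aut _ _).symm
      have ht : theta p q (tgen p) (PresentedGroup.of (rels := polygonRels p q) 0) =
          PresentedGroup.of 1 := by
        show sh p q ((tgen p).toAdd) (PresentedGroup.of 0) = _
        rw [sh_of, zero_add]
        rfl
      rw [key, ht, ← MonoidHom.map_inv, ← MonoidHom.map_inv, ← MonoidHom.map_mul,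
        ← MonoidHom.map_mul, ← MonoidHom.map_mul]
      have := g_comm p q 0
      rw [zero_add] at this
      rw [this, MonoidHom.map_one])

lemma psi_aa : psi p q (aa p q) = SemidirectProduct.inl (PresentedGroup.of 0) :=
  PresentedGroup.toGroup.of _

lemma psi_rr : psi p q (rr p q) = SemidirectProduct.inr (tgen p) :=
  PresentedGroup.toGroup.of _

lemma psi_phi (i : ZMod p) :
    psi p q (phi p q (PresentedGroup.of i)) = SemidirectProduct.inl (PresentedGroup.of i) := by
  rw [phi_of]
  unfold c
  rw [MonoidHom.map_mul, MonoidHom.map_mul, MonoidHom.map_inv, MonoidHom.map_zpow,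
    psi_aa, psi_rr, ← MonoidHom.map_zpow, ← MonoidHom.map_inv,
    ← SemidirectProduct.inl_aut, theta_tgen_zpow_of0, intCast_val]

lemma phi_injective : Function.Injective (phi p q) := by
  have h : (psi p q).comp (phi p q) = SemidirectProduct.inl := by
    apply PresentedGroup.ext
    intro i
    rw [MonoidHom.comp_apply]
    exact psi_phi p q i
  have hinj : Function.Injective ((psi p q).comp (phi p q)) := by
    rw [h]; exact SemidirectProduct.inl_injective
  exact Function.Injective.of_comp hinj


/-- projection to `ZMod p`. -/
def pi' : Hp p q →* Multiplicative (ZMod p) :=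
  PresentedGroup.toGroup (f := fun b : Bool => if b then 1 else tgen p) (by
    intro r hr
    simp only [HRels, Set.mem_insert_iff, Set.mem_singleton_iff] at hr
    rcases hr with rfl | rfl | rfl
    · simp only [MonoidHom.map_pow, FreeGroup.lift_apply_of, if_pos rfl, if_true, one_pow]
    · simp only [MonoidHom.map_pow, FreeGroup.lift_apply_of, if_neg Bool.false_ne_true]
      exact tgen_pow p
    · simp only [MonoidHom.map_mul, MonoidHom.map_inv, FreeGroup.lift_apply_of, if_pos rfl, if_true,
        if_neg Bool.false_ne_true]
      simp)

lemma pi'_aa : pi' p q (aa p q) = 1 := PresentedGroup.toGroup.of _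

lemma pi'_rr : pi' p q (rr p q) = tgen p := PresentedGroup.toGroup.of _

lemma range_le_ker : (phi p q).range ≤ (pi' p q).ker := by
  rintro x ⟨g, rfl⟩
  rw [MonoidHom.mem_ker]
  have hcomp : (pi' p q).comp (phi p q) = 1 := by
    apply PresentedGroup.ext
    intro i
    rw [MonoidHom.comp_apply, phi_of]
    unfold c
    rw [MonoidHom.map_mul, MonoidHom.map_mul, MonoidHom.map_inv, MonoidHom.map_zpow,
      pi'_aa, pi'_rr]
    simp
  calc pi' p q (phi p q g) = ((pi' p q).comp (phi p q)) g := rfl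
    _ = 1 := by rw [hcomp]; rfl

lemma conj_rr_mem {n : Hp p q} (hn : n ∈ (phi p q).range) :
    rr p q * n * (rr p q)⁻¹ ∈ (phi p q).range := by
  obtain ⟨g, rfl⟩ := hn
  have : g ∈ Subgroup.comap ((MulAut.conj (rr p q)).toMonoidHom.comp (phi p q))
      (phi p q).range := by
    apply PresentedGroup.generated_by
    intro j
    rw [Subgroup.mem_comap, MonoidHom.comp_apply, phi_of]
    simp only [MulEquiv.coe_toMonoidHom, MulAut.conj_apply]
    have h1 : rr p q * c p q (j.val) * (rr p q)⁻¹ = c p q ((j.val : ℤ) + 1) := by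
      unfold c; rw [zpow_add_one]; group
    have h2 : c p q ((j.val : ℤ) + 1) = c p q ((j + 1).val) := by
      apply c_congr
      rw [Int.cast_add, intCast_val, intCast_val, Int.cast_one]
    rw [h1, h2]
    exact ⟨PresentedGroup.of (j + 1), phi_of p q _⟩
  simpa using this

lemma conj_rr_inv_mem {n : Hp p q} (hn : n ∈ (phi p q).range) :
    (rr p q)⁻¹ * n * rr p q ∈ (phi p q).range := by
  obtain ⟨g, rfl⟩ := hn
  have : g ∈ Subgroup.comap ((MulAut.conj (rr p q)⁻¹).toMonoidHom.comp (phi p q))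
      (phi p q).range := by
    apply PresentedGroup.generated_by
    intro j
    rw [Subgroup.mem_comap, MonoidHom.comp_apply, phi_of]
    simp only [MulEquiv.coe_toMonoidHom, MulAut.conj_apply]
    have h1 : (rr p q)⁻¹ * c p q (j.val) * rr p q = c p q ((j.val : ℤ) - 1) := by
      unfold c; rw [zpow_sub_one]; group
    have h2 : c p q ((j.val : ℤ) - 1) = c p q ((j - 1).val) := by
      apply c_congr
      rw [Int.cast_sub, intCast_val, intCast_val, Int.cast_one]
    rw [inv_inv, h1, h2]
    exact ⟨PresentedGroup.of (j - 1), phi_of p q _⟩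
  simpa using this

lemma conj_zpow_mem (k : ℤ) (n : Hp p q) (hn : n ∈ (phi p q).range) :
    (rr p q) ^ k * n * ((rr p q) ^ k)⁻¹ ∈ (phi p q).range := by
  induction k using Int.induction_on generalizing n hn with
  | zero => simpa using hn
  | succ k ih =>
    have e : (rr p q) ^ ((k : ℤ) + 1) = rr p q * (rr p q) ^ (k : ℤ) := by
      rw [add_comm, zpow_add, zpow_one]
    rw [e, show rr p q * (rr p q) ^ (k : ℤ) * n * (rr p q * (rr p q) ^ (k : ℤ))⁻¹ =
      rr p q * ((rr p q) ^ (k : ℤ) * n * ((rr p q) ^ (k : ℤ))⁻¹) * (rr p q)⁻¹ by group]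
    exact conj_rr_mem p q (ih n hn)
  | pred k ih =>
    have e : (rr p q) ^ (-(k : ℤ) - 1) = (rr p q)⁻¹ * (rr p q) ^ (-(k : ℤ)) := by
      rw [sub_eq_add_neg, add_comm, zpow_add, zpow_neg_one]
    rw [e, show (rr p q)⁻¹ * (rr p q) ^ (-(k : ℤ)) * n * ((rr p q)⁻¹ * (rr p q) ^ (-(k : ℤ)))⁻¹ =
      (rr p q)⁻¹ * ((rr p q) ^ (-(k : ℤ)) * n * ((rr p q) ^ (-(k : ℤ)))⁻¹) * rr p q by group]
    exact conj_rr_inv_mem p q (ih n hn)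

/-- the subgroup of elements of the form `n * r^k`. -/
def TT : Subgroup (Hp p q) where
  carrier := {x | ∃ n ∈ (phi p q).range, ∃ k : ℤ, x = n * (rr p q) ^ k}
  one_mem' := ⟨1, one_mem _, 0, by simp⟩
  mul_mem' := by
    rintro x y ⟨n, hn, k, rfl⟩ ⟨m, hm, l, rfl⟩
    exact ⟨n * ((rr p q) ^ k * m * ((rr p q) ^ k)⁻¹),
      mul_mem hn (conj_zpow_mem p q k m hm), k + l, by rw [zpow_add]; group⟩
  inv_mem' := by
    rintro x ⟨n, hn, k, rfl⟩
    exact ⟨(rr p q) ^ (-k) * n⁻¹ * ((rr p q) ^ (-k))⁻¹,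
      conj_zpow_mem p q (-k) _ (inv_mem hn), -k, by rw [zpow_neg]; group⟩

lemma aa_mem_range : aa p q ∈ (phi p q).range := by
  refine ⟨PresentedGroup.of 0, ?_⟩
  rw [phi_of]
  unfold c
  simp [ZMod.val_zero]

lemma decomp (x : Hp p q) : ∃ n ∈ (phi p q).range, ∃ k : ℤ, x = n * (rr p q) ^ k := by
  have hx : x ∈ TT p q := by
    apply PresentedGroup.generated_by
    intro j
    cases j
    · exact ⟨1, one_mem _, 1, by simp [rr]⟩
    · exact ⟨aa p q, aa_mem_range p q, 0, by simp [aa]⟩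
  exact hx

lemma ker_le_range : (pi' p q).ker ≤ (phi p q).range := by
  intro x hx
  obtain ⟨n, hn, k, rfl⟩ := decomp p q x
  have h1 : pi' p q n = 1 := range_le_ker p q hn
  rw [MonoidHom.mem_ker, MonoidHom.map_mul, h1, one_mul, MonoidHom.map_zpow, pi'_rr] at hx
  have hk : ((k : ZMod p)) = 0 := by
    have h3 : Multiplicative.toAdd ((tgen p) ^ k) = 0 := by rw [hx]; rfl
    rwa [toAdd_zpow, show Multiplicative.toAdd (tgen p) = 1 from rfl, zsmul_eq_mul,
      mul_one] at h3
  have : (rr p q) ^ k = 1 := by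
    rw [rr_zpow_eq p q (l := 0) (by rw [hk]; simp), zpow_zero]
  rw [this, mul_one]
  exact hn

lemma range_eq_ker : (phi p q).range = (pi' p q).ker :=
  le_antisymm (range_le_ker p q) (ker_le_range p q)

lemma pi'_surj : Function.Surjective (pi' p q) := by
  intro y
  refine ⟨(rr p q) ^ ((Multiplicative.toAdd y).val), ?_⟩
  rw [MonoidHom.map_pow, pi'_rr]
  have : (tgen p) ^ ((Multiplicative.toAdd y).val) =
      Multiplicative.ofAdd ((((Multiplicative.toAdd y).val : ℕ) : ZMod p)) := by
    rw [show ((((Multiplicative.toAdd y).val : ℕ) : ZMod p)) =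
      ((Multiplicative.toAdd y).val : ℕ) • (1 : ZMod p) by rw [nsmul_eq_mul, mul_one],
      ofAdd_nsmul]
    rfl
  rw [this, ZMod.natCast_val, ZMod.cast_id]
  rfl

lemma index_range : (phi p q).range.index = p := by
  rw [range_eq_ker, Subgroup.index_ker]
  have htop : (pi' p q).range = ⊤ := MonoidHom.range_eq_top.2 (pi'_surj p q)
  rw [htop]
  rw [Nat.card_congr Subgroup.topEquiv.toEquiv,
    Nat.card_congr (MulEquiv.toEquiv (MulEquiv.refl _)),
    Nat.card_congr Multiplicative.toAdd, Nat.card_zmod]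

end Stmt1Aux

theorem stmt1 (p q : ℕ) (hp : 5 ≤ p) (hq : 3 ≤ q) :
    ∃ φ : PolygonGroup p q →* HGroup p q,
      Function.Injective φ ∧
      (∀ i : ZMod p,
        φ (PresentedGroup.of i) =
          (PresentedGroup.of false : HGroup p q) ^ (i.val) * PresentedGroup.of true *
            ((PresentedGroup.of false : HGroup p q) ^ (i.val))⁻¹) ∧
      φ.range.index = p := by
  haveI : NeZero p := ⟨by omega⟩
  refine ⟨Stmt1Aux.phi p q, Stmt1Aux.phi_injective p q, fun i => ?_, Stmt1Aux.index_range p q⟩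
  have h2 : Stmt1Aux.c p q i.val =
      (Stmt1Aux.rr p q) ^ (i.val) * Stmt1Aux.aa p q * ((Stmt1Aux.rr p q) ^ (i.val))⁻¹ := by
    unfold Stmt1Aux.c
    rw [zpow_natCast]
  exact (Stmt1Aux.phi_of p q i).trans h2
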